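/- arXiv:1509.05902 — 2 statements merged into one kernel-verified Lean document; each statement's English description precedes it below -/
import Mathlib

section
/- (Sum-of-squared-logarithms inequality) Let x, y be strictly positive vectors in ℝ^n with e_k(x) ≤ e_k(y) for k = 1,…,n−1 and e_n(x) = e_n(y). Then Σ_{i=1}^n (log x_i)^2 ≤ Σ_{i=1}^n (log y_i)^2. -/
open Finset Real

noncomputable def esymm (n k : ℕ) (x : Fin n → ℝ) : ℝ :=
  ∑ s ∈ Finset.powersetCard k (Finset.univ : Finset (Fin n)), ∏ i ∈ s, x i

section SSLI
open MeasureTheory Set Filter intervalIntegral Metric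


noncomputable def gfun (x t : ℝ) : ℝ :=
  (Real.log (x + t) - Real.log (1 + t) - Real.log x) / t + Real.log x / (1 + t)

-- base integrable function
lemma integrable_base {m : ℝ} (hm : 0 < m) :
    IntegrableOn (fun t => ((m + t) ^ 2)⁻¹) (Set.Ioi (0:ℝ)) := by
  have hcont : ∀ T : ℝ, 0 ≤ T → IntegrableOn (fun t => ((m + t) ^ 2)⁻¹) (Set.Ioc 0 T) := by
    intro T hT
    apply (ContinuousOn.integrableOn_Icc ?_).mono_set Set.Ioc_subset_Icc_self
    apply ContinuousOn.inv₀ (by fun_prop)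
    intro t ht
    have : 0 < m + t := by have := ht.1; nlinarith [ht.1]
    positivity
  have key : ∀ T : ℝ, 0 ≤ T →
      (∫ t in (0:ℝ)..T, ‖((m + t) ^ 2)⁻¹‖) = m⁻¹ - (m + T)⁻¹ := by
    intro T hT
    have h1 : (∫ t in (0:ℝ)..T, ‖((m + t) ^ 2)⁻¹‖) = ∫ t in (0:ℝ)..T, ((m + t) ^ 2)⁻¹ := by
      apply intervalIntegral.integral_congr
      intro t ht
      rw [Set.uIcc_of_le hT] at ht
      have : 0 < m + t := by nlinarith [ht.1]
      show ‖((m + t) ^ 2)⁻¹‖ = ((m + t) ^ 2)⁻¹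
      rw [Real.norm_eq_abs, abs_of_nonneg (by positivity)]
    rw [h1]
    have := intervalIntegral.integral_eq_sub_of_hasDerivAt
      (f := fun t => -(m + t)⁻¹) (f' := fun t => ((m + t) ^ 2)⁻¹) (a := 0) (b := T)
      ?_ ?_
    · rw [this, add_zero]; ring
    · intro t ht
      rw [Set.uIcc_of_le hT] at ht
      have htpos : 0 < m + t := by nlinarith [ht.1]
      have : HasDerivAt (fun t : ℝ => m + t) 1 t := (hasDerivAt_id t).const_add m
      have h2 := (this.inv htpos.ne').neg
      convert h2 using 1
      · funext t; simp
      · ring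
    · apply ContinuousOn.intervalIntegrable
      apply ContinuousOn.inv₀ (by fun_prop)
      intro t ht
      rw [Set.uIcc_of_le hT] at ht
      have : 0 < m + t := by nlinarith [ht.1]
      positivity
  have hfi : ∀ i : ℝ, IntegrableOn (fun t => ((m + t) ^ 2)⁻¹) (Set.Ioc 0 ((fun T : ℝ => T) i)) := by
    intro i
    rcases le_or_gt i 0 with h | h
    · rw [show Set.Ioc (0:ℝ) i = ∅ from Set.Ioc_eq_empty (by simpa using h)]
      exact integrableOn_empty
    · exact hcont i h.le
  have hb : ∀ᶠ i in atTop, (∫ t in (0:ℝ)..(fun T : ℝ => T) i, ‖((m + t) ^ 2)⁻¹‖) ≤ m⁻¹ := by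
    filter_upwards [eventually_ge_atTop (0:ℝ)] with T hT
    rw [key T hT]
    have h1 : 0 < m + T := by linarith
    have : 0 < (m + T)⁻¹ := by positivity
    linarith
  exact MeasureTheory.integrableOn_Ioi_of_intervalIntegral_norm_bounded m⁻¹ 0 hfi tendsto_id hb

-- integrability of t ↦ (1+t)⁻¹ - (s+t)⁻¹ on Ioi 0
lemma integrable_diff {s : ℝ} (hs : 0 < s) :
    IntegrableOn (fun t => (1 + t)⁻¹ - (s + t)⁻¹) (Set.Ioi (0:ℝ)) := by
  set m := min 1 s with hm
  have hm0 : 0 < m := lt_min one_pos hs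
  apply Integrable.mono' ((integrable_base hm0).const_mul |s - 1|)
  · apply ContinuousOn.aestronglyMeasurable ?_ measurableSet_Ioi
    apply ContinuousOn.sub
    · apply ContinuousOn.inv₀ (by fun_prop)
      intro t ht
      have : (0:ℝ) < t := ht
      positivity
    · apply ContinuousOn.inv₀ (by fun_prop)
      intro t ht
      have : (0:ℝ) < t := ht
      positivity
  · rw [ae_restrict_iff' measurableSet_Ioi]
    refine ae_of_all _ fun t ht => ?_
    have ht : (0:ℝ) < t := ht
    have h1 : (0:ℝ) < 1 + t := by linarith
    have h2 : 0 < s + t := by linarith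
    have hmt : 0 < m + t := by linarith
    have e : (1 + t)⁻¹ - (s + t)⁻¹ = (s - 1) / ((1 + t) * (s + t)) := by
      field_simp
      ring
    rw [e, Real.norm_eq_abs, abs_div, abs_of_pos (show (0:ℝ) < (1+t)*(s+t) by positivity)]
    rw [div_le_iff₀ (by positivity)]
    have hb1 : m + t ≤ 1 + t := by have : m ≤ 1 := min_le_left _ _; linarith
    have hb2 : m + t ≤ s + t := by have : m ≤ s := min_le_right _ _; linarith
    calc |s - 1| = |s - 1| * (((m+t)^2)⁻¹ * (m+t)^2) := by
            rw [inv_mul_cancel₀ (by positivity), mul_one]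
      _ ≤ |s - 1| * ((m+t)^2)⁻¹ * ((1 + t) * (s + t)) := by
            rw [mul_assoc]
            apply mul_le_mul_of_nonneg_left ?_ (abs_nonneg _)
            apply mul_le_mul_of_nonneg_left ?_ (by positivity)
            calc (m+t)^2 = (m+t)*(m+t) := sq (m+t) ▸ by ring
              _ ≤ (1 + t) * (s + t) := by nlinarith

-- FTC on [0,T]
lemma ftc_diff {s : ℝ} (hs : 0 < s) {T : ℝ} (hT : 0 ≤ T) :
    (∫ t in (0:ℝ)..T, ((1 + t)⁻¹ - (s + t)⁻¹)) =
      Real.log (1 + T) - Real.log (s + T) + Real.log s := by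
  have := intervalIntegral.integral_eq_sub_of_hasDerivAt
    (f := fun t => Real.log (1 + t) - Real.log (s + t))
    (f' := fun t => (1 + t)⁻¹ - (s + t)⁻¹) (a := 0) (b := T) ?_ ?_
  · rw [this]; simp [Real.log_one]
  · intro t ht
    rw [Set.uIcc_of_le hT] at ht
    have h1 : (0:ℝ) < 1 + t := by have := ht.1; linarith
    have h2 : 0 < s + t := by have := ht.1; linarith
    have d1 : HasDerivAt (fun t : ℝ => Real.log (1 + t)) (1 / (1 + t)) t :=
      HasDerivAt.log ((hasDerivAt_id t).const_add 1) h1.ne'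
    have d2 : HasDerivAt (fun t : ℝ => Real.log (s + t)) (1 / (s + t)) t :=
      HasDerivAt.log ((hasDerivAt_id t).const_add s) h2.ne'
    have := d1.fun_sub d2
    simpa [one_div] using this
  · apply ContinuousOn.intervalIntegrable
    apply ContinuousOn.sub
    · apply ContinuousOn.inv₀ (by fun_prop)
      intro t ht
      rw [Set.uIcc_of_le hT] at ht
      have := ht.1; positivity
    · apply ContinuousOn.inv₀ (by fun_prop)
      intro t ht
      rw [Set.uIcc_of_le hT] at ht
      have := ht.1; positivity

-- value of improper integral
lemma integral_diff {s : ℝ} (hs : 0 < s) :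
    (∫ t in Set.Ioi (0:ℝ), ((1 + t)⁻¹ - (s + t)⁻¹)) = Real.log s := by
  have h1 := MeasureTheory.intervalIntegral_tendsto_integral_Ioi 0
    (integrable_diff hs) (l := atTop) tendsto_id
  refine tendsto_nhds_unique h1 ?_
  have h2 : Tendsto (fun T : ℝ => Real.log (1 + T) - Real.log (s + T) + Real.log s)
      atTop (nhds (Real.log s)) := by
    have h3 : Tendsto (fun T : ℝ => (1 + T) / (s + T)) atTop (nhds 1) := by
      have h4 : Tendsto (fun T : ℝ => 1 + (1 - s) / (s + T)) atTop (nhds 1) := by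
        have : Tendsto (fun T : ℝ => (1 - s) / (s + T)) atTop (nhds 0) :=
          Tendsto.div_atTop tendsto_const_nhds (tendsto_atTop_add_const_left _ s tendsto_id)
        simpa using tendsto_const_nhds.add this
      apply h4.congr'
      filter_upwards [eventually_gt_atTop (0:ℝ)] with T hT
      have : 0 < s + T := by linarith
      field_simp
      ring
    have h5 : Tendsto (fun T : ℝ => Real.log ((1 + T) / (s + T))) atTop (nhds 0) := by
      have := (Real.continuousAt_log one_ne_zero).tendsto.comp h3
      simpa [Function.comp_def] using this
    have h6 : (fun T : ℝ => Real.log (1 + T) - Real.log (s + T) + Real.log s) =ᶠ[atTop]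
        (fun T : ℝ => Real.log ((1 + T) / (s + T)) + Real.log s) := by
      filter_upwards [eventually_gt_atTop (0:ℝ)] with T hT
      rw [Real.log_div (by linarith) (by linarith)]
    have h7 := h5.add (tendsto_const_nhds (x := Real.log s))
    rw [zero_add] at h7
    exact Tendsto.congr' h6.symm h7
  apply h2.congr'
  filter_upwards [eventually_ge_atTop (0:ℝ)] with T hT
  exact (ftc_diff hs hT).symm



-- gfun as an integral in s
lemma gfun_eq_integral {x t : ℝ} (hx : 0 < x) (ht : 0 < t) :
    gfun x t = ∫ s in (1:ℝ)..x, ((s * (1 + t))⁻¹ - (s * (s + t))⁻¹) := by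
  have hmin : 0 < min 1 x := lt_min one_pos hx
  have key := intervalIntegral.integral_eq_sub_of_hasDerivAt
    (f := fun s => Real.log s / (1 + t) + (Real.log (s + t) - Real.log s) / t)
    (f' := fun s => (s * (1 + t))⁻¹ - (s * (s + t))⁻¹) (a := 1) (b := x) ?_ ?_
  · rw [key]
    simp only [Real.log_one]
    unfold gfun
    have h1t : (1:ℝ) + t ≠ 0 := by positivity
    have hxne : x ≠ 0 := hx.ne'
    field_simp
    ring
  · intro s hs
    have hs0 : 0 < s := lt_of_lt_of_le hmin (by
      rcases Set.mem_uIcc.1 hs with h | h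
      · exact le_trans (min_le_left _ _) h.1
      · exact le_trans (min_le_right _ _) h.1)
    have hst : 0 < s + t := by linarith
    have d1 : HasDerivAt (fun s : ℝ => Real.log s / (1 + t)) (s⁻¹ / (1 + t)) s := by
      have := (Real.hasDerivAt_log hs0.ne').div_const (1 + t)
      simpa using this
    have d2 : HasDerivAt (fun s : ℝ => (Real.log (s + t) - Real.log s) / t)
        (((s + t)⁻¹ - s⁻¹) / t) s := by
      have e1 : HasDerivAt (fun s : ℝ => Real.log (s + t)) (1 / (s + t)) s :=
        HasDerivAt.log ((hasDerivAt_id s).add_const t) hst.ne'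
      have := ((e1.fun_sub (Real.hasDerivAt_log hs0.ne')).div_const t)
      simpa [one_div] using this
    have := d1.fun_add d2
    convert this using 1
    have h1t : (0:ℝ) < 1 + t := by linarith
    field_simp
    ring
  · apply ContinuousOn.intervalIntegrable
    apply ContinuousOn.sub
    · apply ContinuousOn.inv₀ (by fun_prop)
      intro s hs
      have hs0 : 0 < s := lt_of_lt_of_le hmin (by
        rcases Set.mem_uIcc.1 hs with h | h
        · exact le_trans (min_le_left _ _) h.1
        · exact le_trans (min_le_right _ _) h.1)
      positivity
    · apply ContinuousOn.inv₀ (by fun_prop)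
      intro s hs
      have hs0 : 0 < s := lt_of_lt_of_le hmin (by
        rcases Set.mem_uIcc.1 hs with h | h
        · exact le_trans (min_le_left _ _) h.1
        · exact le_trans (min_le_right _ _) h.1)
      have : 0 < s + t := by linarith
      positivity

-- pointwise bound on gfun
lemma gfun_bound {x t : ℝ} (hx : 0 < x) (ht : 0 < t) :
    ‖gfun x t‖ ≤ (|x - 1| * (max 1 x) / (min 1 x)) * ((min 1 x + t) ^ 2)⁻¹ := by
  have hmin : 0 < min 1 x := lt_min one_pos hx
  set m := min 1 x
  set M := max 1 x
  have hM : 0 < M := lt_of_lt_of_le one_pos (le_max_left _ _)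
  rw [gfun_eq_integral hx ht]
  have hb := intervalIntegral.norm_integral_le_of_norm_le_const
    (C := (M / m) * ((m + t) ^ 2)⁻¹) (a := 1) (b := x)
    (f := fun s => (s * (1 + t))⁻¹ - (s * (s + t))⁻¹) ?_
  · calc ‖∫ s in (1:ℝ)..x, ((s * (1 + t))⁻¹ - (s * (s + t))⁻¹)‖
        ≤ (M / m) * ((m + t) ^ 2)⁻¹ * |x - 1| := hb
      _ = |x - 1| * M / m * ((m + t) ^ 2)⁻¹ := by ring
  · intro s hs
    rw [Set.uIoc_eq_union] at hs
    have hsm : m ≤ s ∧ s ≤ M := by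
      rcases hs with h | h
      · exact ⟨le_trans (min_le_left _ _) h.1.le, le_trans h.2 (le_max_right _ _)⟩
      · exact ⟨le_trans (min_le_right _ _) h.1.le, le_trans h.2 (le_max_left _ _)⟩
    have hs0 : 0 < s := lt_of_lt_of_le hmin hsm.1
    have hst : 0 < s + t := by linarith
    have h1t : (0:ℝ) < 1 + t := by linarith
    have e : (s * (1 + t))⁻¹ - (s * (s + t))⁻¹ = (s - 1) / (s * ((1 + t) * (s + t))) := by
      field_simp
      ring
    show ‖(s * (1 + t))⁻¹ - (s * (s + t))⁻¹‖ ≤ M / m * ((m + t) ^ 2)⁻¹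
    rw [e, Real.norm_eq_abs, abs_div,
      abs_of_pos (show (0:ℝ) < s * ((1 + t) * (s + t)) by positivity)]
    rw [div_le_iff₀ (by positivity)]
    have hmt : 0 < m + t := by linarith
    have hm1 : m ≤ 1 := min_le_left _ _
    have habs : |s - 1| ≤ M := by
      rw [abs_le]
      constructor
      · have : (1:ℝ) ≤ M := le_max_left _ _
        nlinarith [hsm.1, hmin.le]
      · have : s ≤ M := hsm.2
        linarith [hM]
    have key : (m + t) ^ 2 ≤ (1 + t) * (s + t) := by nlinarith [hsm.1]
    calc |s - 1| = |s - 1| * (((m+t)^2)⁻¹ * (m+t)^2) := by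
          rw [inv_mul_cancel₀ (by positivity), mul_one]
      _ ≤ M / m * ((m + t) ^ 2)⁻¹ * (s * ((1 + t) * (s + t))) := by
          have h1 : |s - 1| * (((m+t)^2)⁻¹ * (m+t)^2) ≤ M * (((m+t)^2)⁻¹ * ((1 + t) * (s + t))) := by
            apply mul_le_mul habs ?_ (by positivity) hM.le
            exact mul_le_mul_of_nonneg_left key (by positivity)
          have h2 : M * (((m+t)^2)⁻¹ * ((1 + t) * (s + t))) ≤
              M / m * ((m + t) ^ 2)⁻¹ * (s * ((1 + t) * (s + t))) := by
            have hms : (1:ℝ) ≤ s / m := by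
              rw [le_div_iff₀ hmin, one_mul]
              exact hsm.1
            calc M * (((m+t)^2)⁻¹ * ((1 + t) * (s + t)))
                = M * 1 * (((m+t)^2)⁻¹ * ((1 + t) * (s + t))) := by ring
              _ ≤ M * (s / m) * (((m+t)^2)⁻¹ * ((1 + t) * (s + t))) := by
                  apply mul_le_mul_of_nonneg_right ?_ (by positivity)
                  exact mul_le_mul_of_nonneg_left hms hM.le
              _ = M / m * ((m + t) ^ 2)⁻¹ * (s * ((1 + t) * (s + t))) := by ring
          linarith



lemma gfun_continuousOn {x : ℝ} (hx : 0 < x) :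
    ContinuousOn (gfun x) (Set.Ioi (0:ℝ)) := by
  unfold gfun
  apply ContinuousOn.add
  · apply ContinuousOn.div
    · apply ContinuousOn.sub ?_ continuousOn_const
      apply ContinuousOn.sub
      · apply ContinuousOn.log (by fun_prop)
        intro t ht
        have : (0:ℝ) < t := ht
        positivity
      · apply ContinuousOn.log (by fun_prop)
        intro t ht
        have : (0:ℝ) < t := ht
        positivity
    · fun_prop
    · intro t ht
      exact ne_of_gt ht
  · apply ContinuousOn.div continuousOn_const (by fun_prop)
    intro t ht
    have : (0:ℝ) < t := ht
    positivity

lemma gfun_integrable {x : ℝ} (hx : 0 < x) :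
    IntegrableOn (gfun x) (Set.Ioi (0:ℝ)) := by
  have hmin : 0 < min 1 x := lt_min one_pos hx
  apply Integrable.mono' ((integrable_base hmin).const_mul (|x - 1| * (max 1 x) / (min 1 x)))
  · exact (gfun_continuousOn hx).aestronglyMeasurable measurableSet_Ioi
  · rw [ae_restrict_iff' measurableSet_Ioi]
    exact ae_of_all _ fun t ht => gfun_bound hx ht

lemma gfun_hasDerivAt {x t : ℝ} (hx : 0 < x) (ht : 0 < t) :
    HasDerivAt (fun x => gfun x t) (x⁻¹ * ((1 + t)⁻¹ - (x + t)⁻¹)) x := by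
  have hxt : 0 < x + t := by linarith
  have h1t : (0:ℝ) < 1 + t := by linarith
  have d1 : HasDerivAt (fun x : ℝ => Real.log (x + t)) (1 / (x + t)) x :=
    HasDerivAt.log ((hasDerivAt_id x).add_const t) hxt.ne'
  have d2 : HasDerivAt (fun x : ℝ =>
      (Real.log (x + t) - Real.log (1 + t) - Real.log x) / t)
      ((1 / (x + t) - 0 - x⁻¹) / t) x := by
    have := ((d1.fun_sub (hasDerivAt_const x (Real.log (1 + t)))).fun_sub
      (Real.hasDerivAt_log hx.ne')).div_const t
    simpa using this
  have d3 : HasDerivAt (fun x : ℝ => Real.log x / (1 + t)) (x⁻¹ / (1 + t)) x :=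
    (Real.hasDerivAt_log hx.ne').div_const (1 + t)
  have := d2.fun_add d3
  refine this.congr_deriv ?_
  field_simp
  ring

lemma integral_gfun_hasDerivAt {x : ℝ} (hx : 0 < x) :
    HasDerivAt (fun x => ∫ t in Set.Ioi (0:ℝ), gfun x t) (Real.log x / x) x := by
  set m := min 1 (x / 2) with hmdef
  have hm : 0 < m := lt_min one_pos (by linarith)
  set K := (2 / x) * (3 * x / 2 + 1)
  have key := _root_.hasDerivAt_integral_of_dominated_loc_of_deriv_le
    (F := fun x t => gfun x t)
    (F' := fun x t => x⁻¹ * ((1 + t)⁻¹ - (x + t)⁻¹))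
    (x₀ := x) (s := Metric.ball x (x / 2)) (bound := fun t => K * ((m + t) ^ 2)⁻¹)
    (μ := volume.restrict (Set.Ioi (0:ℝ))) (Metric.ball_mem_nhds x (by linarith)) ?_ ?_ ?_ ?_ ?_ ?_
  · have := key.2
    have heq : (∫ t in Set.Ioi (0:ℝ), x⁻¹ * ((1 + t)⁻¹ - (x + t)⁻¹)) = Real.log x / x := by
      rw [MeasureTheory.integral_const_mul, integral_diff hx]
      rw [div_eq_inv_mul]
    rwa [heq] at this
  · filter_upwards [Ioi_mem_nhds hx] with y hy
    exact (gfun_continuousOn hy).aestronglyMeasurable measurableSet_Ioi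
  · exact gfun_integrable hx
  · apply ContinuousOn.aestronglyMeasurable ?_ measurableSet_Ioi
    apply ContinuousOn.mul continuousOn_const
    apply ContinuousOn.sub
    · apply ContinuousOn.inv₀ (by fun_prop)
      intro t ht
      have : (0:ℝ) < t := ht
      positivity
    · apply ContinuousOn.inv₀ (by fun_prop)
      intro t ht
      have : (0:ℝ) < t := ht
      have : 0 < x + t := by linarith
      positivity
  · rw [ae_restrict_iff' measurableSet_Ioi]
    refine ae_of_all _ fun t ht y hy => ?_
    have ht : (0:ℝ) < t := ht
    rw [Metric.mem_ball, Real.dist_eq, abs_lt] at hy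
    have hy1 : x / 2 < y := by linarith
    have hy2 : y < 3 * x / 2 := by linarith
    have hy0 : 0 < y := by linarith
    have h1t : (0:ℝ) < 1 + t := by linarith
    have hyt : 0 < y + t := by linarith
    have e : (1 + t)⁻¹ - (y + t)⁻¹ = (y - 1) / ((1 + t) * (y + t)) := by
      field_simp
      ring
    rw [norm_mul, e, Real.norm_eq_abs, Real.norm_eq_abs, abs_div,
      abs_of_pos (show (0:ℝ) < (1 + t) * (y + t) by positivity),
      abs_of_pos (show (0:ℝ) < y⁻¹ by positivity)]
    have hmt : 0 < m + t := by linarith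
    have hb1 : y⁻¹ ≤ 2 / x := by
      have h := one_div_le_one_div_of_le (by linarith : (0:ℝ) < x / 2) hy1.le
      rw [one_div, one_div, inv_div] at h
      exact h
    have hb2 : |y - 1| ≤ 3 * x / 2 + 1 := by
      rw [abs_le]; constructor <;> nlinarith
    have hb3 : (m + t) ^ 2 ≤ (1 + t) * (y + t) := by
      have h1 : m ≤ 1 := min_le_left _ _
      have h2 : m ≤ x / 2 := min_le_right _ _
      nlinarith
    have hb4 : |y - 1| / ((1 + t) * (y + t)) ≤ (3 * x / 2 + 1) * ((m + t) ^ 2)⁻¹ := by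
      rw [div_le_iff₀ (by positivity)]
      calc |y - 1| = |y - 1| * (((m+t)^2)⁻¹ * (m+t)^2) := by
            rw [inv_mul_cancel₀ (by positivity), mul_one]
        _ ≤ (3 * x / 2 + 1) * (((m+t)^2)⁻¹ * ((1 + t) * (y + t))) := by
            apply mul_le_mul hb2 ?_ (by positivity) (by positivity)
            exact mul_le_mul_of_nonneg_left hb3 (by positivity)
        _ = (3 * x / 2 + 1) * ((m + t) ^ 2)⁻¹ * ((1 + t) * (y + t)) := by ring
    calc y⁻¹ * (|y - 1| / ((1 + t) * (y + t)))
        ≤ (2 / x) * ((3 * x / 2 + 1) * ((m + t) ^ 2)⁻¹) := by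
          apply mul_le_mul hb1 hb4 (by positivity) (by positivity)
      _ = K * ((m + t) ^ 2)⁻¹ := by ring
  · exact (integrable_base hm).const_mul K
  · rw [ae_restrict_iff' measurableSet_Ioi]
    refine ae_of_all _ fun t ht y hy => ?_
    have ht : (0:ℝ) < t := ht
    rw [Metric.mem_ball, Real.dist_eq, abs_lt] at hy
    have hy0 : 0 < y := by linarith
    exact gfun_hasDerivAt hy0 ht

lemma gfun_integral_eq {x : ℝ} (hx : 0 < x) :
    (∫ t in Set.Ioi (0:ℝ), gfun x t) = (Real.log x) ^ 2 / 2 := by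
  set ψ : ℝ → ℝ := fun x => (∫ t in Set.Ioi (0:ℝ), gfun x t) - (Real.log x) ^ 2 / 2 with hψ
  have hd : ∀ y : ℝ, 0 < y → HasDerivAt ψ 0 y := by
    intro y hy
    have d1 := integral_gfun_hasDerivAt hy
    have d2 : HasDerivAt (fun y : ℝ => (Real.log y) ^ 2 / 2) (Real.log y / y) y := by
      have := ((Real.hasDerivAt_log hy.ne').fun_pow 2).div_const 2
      refine this.congr_deriv ?_
      field_simp
      ring
    have := d1.fun_sub d2
    simpa using this
  have hone : ψ 1 = 0 := by
    have : ∀ t : ℝ, gfun 1 t = 0 := by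
      intro t
      unfold gfun
      simp [Real.log_one]
    simp [hψ, this, Real.log_one]
  have hconst : ψ x = ψ 1 := by
    rcases le_total 1 x with h | h
    · have := constant_of_has_deriv_right_zero (f := ψ) (a := 1) (b := x)
        (fun y hy => ((hd y (by rcases hy with ⟨h1, h2⟩; linarith)).continuousAt).continuousWithinAt)
        (fun y hy => ((hd y (by rcases hy with ⟨h1, h2⟩; linarith)).hasDerivWithinAt))
      exact this x ⟨h, le_refl x⟩
    · have := constant_of_has_deriv_right_zero (f := ψ) (a := x) (b := 1)
        (fun y hy => ((hd y (by rcases hy with ⟨h1, h2⟩; linarith)).continuousAt).continuousWithinAt)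
        (fun y hy => ((hd y (by rcases hy with ⟨h1, h2⟩; linarith)).hasDerivWithinAt))
      exact (this 1 ⟨h, le_refl 1⟩).symm
  have : ψ x = 0 := hconst.trans hone
  rw [hψ] at this
  linarith [this]



-- expansion of ∏ (z i + t)
lemma prod_add_expand (n : ℕ) (z : Fin n → ℝ) (t : ℝ) :
    ∏ i, (z i + t) = ∑ k ∈ Finset.range (n + 1), esymm n k z * t ^ (n - k) := by
  rw [Finset.prod_add]
  rw [Finset.sum_powerset]
  rw [Finset.card_univ, Fintype.card_fin]
  apply Finset.sum_congr rfl
  intro k hk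
  rw [esymm, Finset.sum_mul]
  apply Finset.sum_congr rfl
  intro s hs
  rw [Finset.mem_powersetCard] at hs
  congr 1
  rw [Finset.prod_const]
  congr 1
  rw [Finset.card_sdiff_of_subset (Finset.subset_univ s), Finset.card_univ, Fintype.card_fin, hs.2]

lemma esymm_zero_eq (n : ℕ) (z : Fin n → ℝ) : esymm n 0 z = 1 := by
  rw [esymm, Finset.powersetCard_zero, Finset.sum_singleton, Finset.prod_empty]

lemma esymm_top_eq (n : ℕ) (z : Fin n → ℝ) : esymm n n z = ∏ i, z i := by
  have h := Finset.powersetCard_self (Finset.univ : Finset (Fin n))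
  rw [Finset.card_univ, Fintype.card_fin] at h
  rw [esymm, h, Finset.sum_singleton]

theorem stmt_5 (n : ℕ) (x y : Fin n → ℝ)
    (hx : ∀ i, 0 < x i) (hy : ∀ i, 0 < y i)
    (hE : ∀ k, 1 ≤ k → k ≤ n - 1 → esymm n k x ≤ esymm n k y)
    (hEn : esymm n n x = esymm n n y) :
    ∑ i, (Real.log (x i)) ^ 2 ≤ ∑ i, (Real.log (y i)) ^ 2 := by
  -- products are equal
  have hprod : ∏ i, x i = ∏ i, y i := by
    rw [← esymm_top_eq, ← esymm_top_eq]; exact hEn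
  -- product comparison
  have hprodle : ∀ t : ℝ, 0 ≤ t → ∏ i, (x i + t) ≤ ∏ i, (y i + t) := by
    intro t ht
    rw [prod_add_expand, prod_add_expand]
    apply Finset.sum_le_sum
    intro k hk
    rw [Finset.mem_range] at hk
    apply mul_le_mul_of_nonneg_right ?_ (pow_nonneg ht _)
    rcases Nat.eq_or_lt_of_le (Nat.zero_le k) with h0 | h0
    · rw [← h0, esymm_zero_eq, esymm_zero_eq]
    rcases eq_or_ne k n with hn | hn
    · rw [hn]; exact le_of_eq hEn
    · exact hE k h0 (by omega)
  -- sums of gfun compare pointwise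
  have hsum_le : ∀ t : ℝ, t ∈ Set.Ioi (0:ℝ) →
      (∑ i, gfun (x i) t) ≤ ∑ i, gfun (y i) t := by
    intro t ht
    have ht : (0:ℝ) < t := ht
    have h1t : (0:ℝ) < 1 + t := by linarith
    have key : ∀ z : Fin n → ℝ, (∀ i, 0 < z i) →
        (∑ i, gfun (z i) t) =
        (Real.log (∏ i, (z i + t)) - n * Real.log (1 + t) - Real.log (∏ i, z i)) / t
          + Real.log (∏ i, z i) / (1 + t) := by
      intro z hz
      unfold gfun
      rw [Real.log_prod (fun i _ => (hz i).ne'),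
        Real.log_prod (fun i _ => (by have := hz i; positivity : z i + t ≠ 0))]
      rw [Finset.sum_add_distrib, ← Finset.sum_div, ← Finset.sum_div]
      congr 2
      rw [Finset.sum_sub_distrib, Finset.sum_sub_distrib, Finset.sum_const,
        Finset.card_univ, Fintype.card_fin, nsmul_eq_mul]
    rw [key x hx, key y hy, ← hprod]
    have hlog : Real.log (∏ i, (x i + t)) ≤ Real.log (∏ i, (y i + t)) := by
      apply Real.log_le_log ?_ (hprodle t ht.le)
      exact Finset.prod_pos fun i _ => by have := hx i; linarith
    gcongr
  -- integrate
  have hIx : ∀ i : Fin n, IntegrableOn (gfun (x i)) (Set.Ioi (0:ℝ)) :=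
    fun i => gfun_integrable (hx i)
  have hIy : ∀ i : Fin n, IntegrableOn (gfun (y i)) (Set.Ioi (0:ℝ)) :=
    fun i => gfun_integrable (hy i)
  have hmain : (∫ t in Set.Ioi (0:ℝ), ∑ i, gfun (x i) t) ≤
      ∫ t in Set.Ioi (0:ℝ), ∑ i, gfun (y i) t := by
    apply MeasureTheory.setIntegral_mono_on ?_ ?_ measurableSet_Ioi hsum_le
    · exact MeasureTheory.integrable_finset_sum _ fun i _ => hIx i
    · exact MeasureTheory.integrable_finset_sum _ fun i _ => hIy i
  have hex : (∫ t in Set.Ioi (0:ℝ), ∑ i, gfun (x i) t) = (∑ i, (Real.log (x i)) ^ 2) / 2 := by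
    rw [MeasureTheory.integral_finset_sum _ fun i _ => hIx i]
    rw [Finset.sum_div]
    exact Finset.sum_congr rfl fun i _ => by rw [gfun_integral_eq (hx i)]
  have hey : (∫ t in Set.Ioi (0:ℝ), ∑ i, gfun (y i) t) = (∑ i, (Real.log (y i)) ^ 2) / 2 := by
    rw [MeasureTheory.integral_finset_sum _ fun i _ => hIy i]
    rw [Finset.sum_div]
    exact Finset.sum_congr rfl fun i _ => by rw [gfun_integral_eq (hy i)]
  rw [hex, hey] at hmain
  linarith

end SSLI
end

section
/- Let X, Y be Hermitian positive definite matrices with unit trace. If e_k(λ(X)) ≤ e_k(λ(Y)) for k = 1,…,n, then for α ∈ (0,1), tr(X^α) ≤ tr(Y^α). -/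
open Finset Real Matrix
open scoped ComplexOrder

section Aux
open MeasureTheory Set


lemma aux_integrable {α : ℝ} (hα : 0 < α) (hα1 : α < 1) {t : ℝ} (ht : 0 < t) :
    IntegrableOn (fun s : ℝ => s ^ (α - 1) * Real.log (1 + t / s)) (Set.Ioi 0) := by
  have hmeas : ∀ u : Set ℝ, u ⊆ Set.Ioi 0 → MeasurableSet u →
      AEStronglyMeasurable (fun s : ℝ => s ^ (α - 1) * Real.log (1 + t / s))
        (volume.restrict u) := by
    intro u hu hmu
    apply ContinuousOn.aestronglyMeasurable _ hmu
    apply ContinuousOn.mul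
    · exact fun s hs => (Real.continuousAt_rpow_const s (α-1)
        (Or.inl (ne_of_gt (hu hs)))).continuousWithinAt
    · apply ContinuousOn.log
      · exact (continuousOn_const.add (continuousOn_const.div continuousOn_id
          (fun s hs => ne_of_gt (hu hs))))
      · intro s hs
        have hs0 : (0:ℝ) < s := hu hs
        positivity
  have h01 : IntegrableOn (fun s : ℝ => s ^ (α - 1) * Real.log (1 + t / s)) (Set.Ioo 0 1) := by
    have hbound : IntegrableOn
        (fun s : ℝ => Real.log (1 + t) * s ^ (α - 1) + (2 / α) * s ^ (α/2 - 1)) (Set.Ioo 0 1) := by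
      apply Integrable.add
      · exact ((intervalIntegral.integrableOn_Ioo_rpow_iff zero_lt_one).mpr
          (by linarith)).const_mul _
      · exact ((intervalIntegral.integrableOn_Ioo_rpow_iff zero_lt_one).mpr
          (by linarith)).const_mul _
    apply hbound.mono' (hmeas _ (fun s hs => hs.1) measurableSet_Ioo)
    rw [ae_restrict_iff' measurableSet_Ioo]
    apply ae_of_all
    intro s hs
    obtain ⟨hs0, hs1⟩ := hs
    have h1 : (0:ℝ) < 1 + t / s := by positivity
    have hsp : (0:ℝ) < s ^ (α - 1) := Real.rpow_pos_of_pos hs0 _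
    have hlogn : 0 ≤ Real.log (1 + t / s) := Real.log_nonneg (by
      have : 0 ≤ t / s := by positivity
      linarith)
    rw [Real.norm_eq_abs, abs_of_nonneg (mul_nonneg hsp.le hlogn)]
    have hlog : Real.log (1 + t / s) ≤ Real.log (1 + t) + (2/α) * s ^ (-(α/2)) := by
      have e1 : Real.log (1 + t / s) ≤ Real.log ((1+t) / s) := by
        apply Real.log_le_log h1
        rw [add_div]
        exact add_le_add_left ((le_div_iff₀ hs0).mpr (by linarith)) _
      have e2 : Real.log ((1+t)/s) = Real.log (1+t) + Real.log (1/s) := by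
        rw [Real.log_div (by positivity) (ne_of_gt hs0), Real.log_div one_ne_zero
          (ne_of_gt hs0), Real.log_one]
        ring
      have e3 : Real.log (1/s) ≤ (2/α) * s ^ (-(α/2)) := by
        calc Real.log (1/s) ≤ (1/s) ^ (α/2) / (α/2) :=
              Real.log_le_rpow_div (by positivity) (by positivity)
          _ = (2/α) * s ^ (-(α/2)) := by
              rw [one_div, Real.inv_rpow hs0.le, ← Real.rpow_neg hs0.le]
              field_simp
      linarith [e1, e2.le, e3]
    calc s ^ (α-1) * Real.log (1 + t/s)
        ≤ s ^ (α-1) * (Real.log (1+t) + (2/α) * s ^ (-(α/2))) :=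
          mul_le_mul_of_nonneg_left hlog hsp.le
      _ = Real.log (1+t) * s ^ (α-1) + (2/α) * s ^ (α/2 - 1) := by
          rw [mul_add]
          congr 1
          · ring
          · rw [mul_comm (s ^ (α-1)), mul_assoc, ← Real.rpow_add hs0]
            ring_nf
  have h1i : IntegrableOn (fun s : ℝ => s ^ (α - 1) * Real.log (1 + t / s)) (Set.Ici 1) := by
    rw [integrableOn_Ici_iff_integrableOn_Ioi]
    have hbound : IntegrableOn (fun s : ℝ => t * s ^ (α - 2)) (Set.Ioi 1) :=
      (integrableOn_Ioi_rpow_of_lt (by linarith) zero_lt_one).const_mul t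
    apply hbound.mono' (hmeas _ (fun s hs => Set.mem_Ioi.mpr (lt_trans zero_lt_one hs)) measurableSet_Ioi)
    rw [ae_restrict_iff' measurableSet_Ioi]
    apply ae_of_all
    intro s hs
    have hs0 : (0:ℝ) < s := lt_trans zero_lt_one hs
    have h1 : (0:ℝ) < 1 + t / s := by positivity
    have hsp : (0:ℝ) < s ^ (α - 1) := Real.rpow_pos_of_pos hs0 _
    have hlogn : 0 ≤ Real.log (1 + t / s) := Real.log_nonneg (by
      have : 0 ≤ t / s := by positivity
      linarith)
    rw [Real.norm_eq_abs, abs_of_nonneg (mul_nonneg hsp.le hlogn)]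
    have hlog : Real.log (1 + t / s) ≤ t / s := by
      have := Real.log_le_sub_one_of_pos h1
      linarith
    calc s ^ (α-1) * Real.log (1 + t/s) ≤ s ^ (α-1) * (t/s) :=
          mul_le_mul_of_nonneg_left hlog hsp.le
      _ = t * s ^ (α-2) := by
          rw [show α - 2 = (α-1) + (-1) by ring, Real.rpow_add hs0, Real.rpow_neg_one]
          field_simp
  have hun : Set.Ioo (0:ℝ) 1 ∪ Set.Ici 1 = Set.Ioi 0 := Set.Ioo_union_Ici_eq_Ioi zero_lt_one
  rw [← hun]
  exact h01.union h1i

noncomputable def Cα (α : ℝ) : ℝ := ∫ s in Set.Ioi (0:ℝ), s ^ (α - 1) * Real.log (1 + 1 / s)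

lemma aux_value {α : ℝ} (hα : 0 < α) (hα1 : α < 1) {t : ℝ} (ht : 0 < t) :
    ∫ s in Set.Ioi (0:ℝ), s ^ (α - 1) * Real.log (1 + t / s) = t ^ α * Cα α := by
  have h := MeasureTheory.integral_comp_mul_left_Ioi
    (fun s : ℝ => s ^ (α - 1) * Real.log (1 + t / s)) 0 ht
  rw [mul_zero] at h
  beta_reduce at h
  have h2 : (∫ x in Set.Ioi (0:ℝ), (t * x) ^ (α - 1) * Real.log (1 + t / (t * x)))
      = t ^ (α - 1) * Cα α := by
    rw [Cα, ← integral_const_mul]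
    apply setIntegral_congr_fun measurableSet_Ioi
    intro x hx
    have hx0 : (0:ℝ) < x := hx
    have hd : t / (t * x) = 1 / x := by
      field_simp
    simp only
    rw [Real.mul_rpow ht.le hx0.le, hd]
    ring
  rw [h2, smul_eq_mul] at h
  have h3 : (∫ s in Set.Ioi (0:ℝ), s ^ (α - 1) * Real.log (1 + t / s))
      = t * (t ^ (α - 1) * Cα α) := by
    rw [h, ← mul_assoc, mul_inv_cancel₀ (ne_of_gt ht), one_mul]
  rw [h3, ← mul_assoc]
  congr 1
  rw [← Real.rpow_one_add' ht.le (by intro hc; exact (by linarith : α ≠ 0) (by linarith))]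
  ring_nf

lemma Cα_pos {α : ℝ} (hα : 0 < α) (hα1 : α < 1) : 0 < Cα α := by
  rw [Cα]
  have hnn : 0 ≤ᵐ[volume.restrict (Set.Ioi (0:ℝ))]
      fun s : ℝ => s ^ (α - 1) * Real.log (1 + 1 / s) := by
    filter_upwards [ae_restrict_mem measurableSet_Ioi] with s hs
    have hs0 : (0:ℝ) < s := hs
    have h2 := Real.rpow_pos_of_pos hs0 (α - 1)
    have hl : 0 ≤ Real.log (1 + 1/s) := Real.log_nonneg (by
      have : 0 ≤ 1/s := by positivity
      linarith)
    positivity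
  rw [setIntegral_pos_iff_support_of_nonneg_ae hnn (aux_integrable hα hα1 zero_lt_one)]
  have hsub : Set.Ioi (0:ℝ) ⊆ Function.support fun s : ℝ => s ^ (α - 1) * Real.log (1 + 1 / s) := by
    intro s hs
    have hs0 : (0:ℝ) < s := hs
    have h1 : 0 < Real.log (1 + 1/s) := Real.log_pos (by
      have : 0 < 1/s := by positivity
      linarith)
    have h2 : 0 < s ^ (α - 1) := Real.rpow_pos_of_pos hs0 _
    exact ne_of_gt (by positivity)
  rw [Set.inter_eq_right.mpr hsub]
  simp

lemma prod_eq_sum_esymm (n : ℕ) (x : Fin n → ℝ) (s : ℝ) :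
    ∏ i, (x i + s) = ∑ k ∈ Finset.range (n+1), esymm n k x * s ^ (n - k) := by
  rw [Finset.prod_add]
  have hmaps : ∀ t ∈ (Finset.univ : Finset (Fin n)).powerset,
      t.card ∈ Finset.range (n+1) := by
    intro t _
    exact Finset.mem_range.mpr (Nat.lt_succ_of_le (le_trans (Finset.card_le_univ t) (by simp)))
  rw [← Finset.sum_fiberwise_of_maps_to hmaps]
  apply Finset.sum_congr rfl
  intro k hk
  rw [esymm, Finset.sum_mul]
  rw [show ((Finset.univ : Finset (Fin n)).powerset.filter fun t => t.card = k)
      = Finset.powersetCard k Finset.univ from (Finset.powersetCard_eq_filter).symm]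
  apply Finset.sum_congr rfl
  intro t ht
  obtain ⟨hsub', hcard⟩ := Finset.mem_powersetCard.mp ht
  rw [Finset.prod_const, Finset.card_sdiff_of_subset (Finset.subset_univ t), Finset.card_univ,
    Fintype.card_fin, hcard]

lemma key {α : ℝ} (hα : 0 < α) (hα1 : α < 1) {n : ℕ} {x y : Fin n → ℝ}
    (hx : ∀ i, 0 < x i) (hy : ∀ i, 0 < y i)
    (h : ∀ s : ℝ, 0 < s → ∏ i, (x i + s) ≤ ∏ i, (y i + s)) :
    ∑ i, x i ^ α ≤ ∑ i, y i ^ α := by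
  have hC := Cα_pos hα hα1
  have hint : ∀ (z : Fin n → ℝ), (∀ i, 0 < z i) →
      IntegrableOn (fun s : ℝ => ∑ i, s ^ (α - 1) * Real.log (1 + z i / s)) (Set.Ioi 0) :=
    fun z hz => integrable_finset_sum _ (fun i _ => aux_integrable hα hα1 (hz i))
  have hval : ∀ (z : Fin n → ℝ), (∀ i, 0 < z i) →
      (∫ s in Set.Ioi (0:ℝ), ∑ i, s ^ (α - 1) * Real.log (1 + z i / s))
        = (∑ i, z i ^ α) * Cα α := by
    intro z hz
    rw [integral_finset_sum _ (fun i _ => aux_integrable hα hα1 (hz i)), Finset.sum_mul]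
    exact Finset.sum_congr rfl fun i _ => aux_value hα hα1 (hz i)
  have hmono : (∫ s in Set.Ioi (0:ℝ), ∑ i, s ^ (α - 1) * Real.log (1 + x i / s))
      ≤ ∫ s in Set.Ioi (0:ℝ), ∑ i, s ^ (α - 1) * Real.log (1 + y i / s) := by
    apply setIntegral_mono_on (hint x hx) (hint y hy) measurableSet_Ioi
    intro s hs
    have hs0 : (0:ℝ) < s := hs
    have hsp : (0:ℝ) ≤ s ^ (α - 1) := (Real.rpow_pos_of_pos hs0 _).le
    rw [← Finset.mul_sum, ← Finset.mul_sum]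
    apply mul_le_mul_of_nonneg_left _ hsp
    have hxne : ∀ i ∈ (Finset.univ : Finset (Fin n)), (1 + x i / s) ≠ 0 := by
      intro i _; have := hx i; positivity
    have hyne : ∀ i ∈ (Finset.univ : Finset (Fin n)), (1 + y i / s) ≠ 0 := by
      intro i _; have := hy i; positivity
    rw [← Real.log_prod hxne, ← Real.log_prod hyne]
    apply Real.log_le_log (by
      apply Finset.prod_pos
      intro i _
      have := hx i; positivity)
    have hrw : ∀ (z : Fin n → ℝ), ∏ i, (1 + z i / s) = (∏ i, (z i + s)) / s ^ n := by
      intro z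
      have he : ∀ i : Fin n, 1 + z i / s = (z i + s) / s := by
        intro i
        rw [add_div, div_self (ne_of_gt hs0)]
        ring
      simp_rw [he]
      rw [Finset.prod_div_distrib, Finset.prod_const, Finset.card_univ, Fintype.card_fin]
    rw [hrw x, hrw y]
    have hsn : (0:ℝ) < s ^ n := by positivity
    exact (div_le_div_iff_of_pos_right hsn).mpr (h s hs0)
  have := (hval x hx) ▸ (hval y hy) ▸ hmono
  exact le_of_mul_le_mul_right this hC

lemma esymm_zero' (n : ℕ) (x : Fin n → ℝ) : esymm n 0 x = 1 := by
  rw [esymm, Finset.powersetCard_zero, Finset.sum_singleton, Finset.prod_empty]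

end Aux

theorem stmt_15 (n : ℕ) (X Y : Matrix (Fin n) (Fin n) ℂ)
    (hX : X.PosDef) (hY : Y.PosDef)
    (hXtr : X.trace = 1) (hYtr : Y.trace = 1)
    (hE : ∀ k, 1 ≤ k → k ≤ n →
      esymm n k hX.1.eigenvalues ≤ esymm n k hY.1.eigenvalues)
    (α : ℝ) (hα : 0 < α) (hα1 : α < 1) :
    ∑ i, (hX.1.eigenvalues i) ^ α ≤ ∑ i, (hY.1.eigenvalues i) ^ α := by
  apply key hα hα1 (fun i => hX.eigenvalues_pos i) (fun i => hY.eigenvalues_pos i)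
  intro s hs
  rw [prod_eq_sum_esymm, prod_eq_sum_esymm]
  apply Finset.sum_le_sum
  intro k hk
  rcases Nat.eq_zero_or_pos k with hk0 | hk1
  · subst hk0
    rw [esymm_zero', esymm_zero']
  · apply mul_le_mul_of_nonneg_right
      (hE k hk1 (Nat.lt_succ_iff.mp (Finset.mem_range.mp hk)))
    positivity
end
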